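/- For Shamir sharing with threshold t over F_p: if the sharing polynomial q of degree ≤ t with q(0) = s is chosen uniformly at random among all such polynomials, then for any set T of at most t indices from {1,…,n}, the vector of shares (q(i))_{i∈T} is uniformly distributed over F_p^{|T|}, independent of the secret s. -/

import Mathlib

open Polynomial Finset


/-- For Shamir sharing with threshold t over F_p, for any set T of at most t
evaluation points among 1,…,n, any secret s, and any target share vector v,
the number of sharing polynomials (degree ≤ t, q(0) = s) realizing v on T is
p^(t - |T|); hence the shares on T are uniformly distributed over F_p^{|T|},
independent of the secret s. -/
theorem stmt_1 (p n t : ℕ) (hp : p.Prime) (hn : n < p) (ht : t < n)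
    (s : ZMod p) (T : Finset ℕ) (hT : T ⊆ Finset.Icc 1 n) (hTcard : T.card ≤ t)
    (v : ℕ → ZMod p) :
    {q : Polynomial (ZMod p) | q.natDegree ≤ t ∧ q.eval 0 = s ∧
      ∀ i ∈ T, q.eval (i : ZMod p) = v i}.ncard = p ^ (t - T.card) := by
  classical
  haveI : Fact p.Prime := ⟨hp⟩
  set k := T.card with hk
  have hlt : ∀ i ∈ T, i < p := fun i hi => lt_of_le_of_lt (Finset.mem_Icc.mp (hT hi)).2 hn
  have hval : ∀ i ∈ T, ((i : ZMod p)).val = i := fun i hi => ZMod.val_cast_of_lt (hlt i hi)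
  have hne0 : ∀ i ∈ T, (i : ZMod p) ≠ 0 := by
    intro i hi h
    have h1 := (Finset.mem_Icc.mp (hT hi)).1
    have h2 := hval i hi
    rw [h, ZMod.val_zero] at h2; omega
  have hinj : Set.InjOn (fun i : ℕ => (i : ZMod p)) T := by
    intro a ha b hb h
    have := congrArg ZMod.val h
    rwa [hval a ha, hval b hb] at this
  set S : Finset (ZMod p) := insert 0 (T.image (fun i : ℕ => (i : ZMod p))) with hS
  have h0S : (0 : ZMod p) ∉ T.image (fun i : ℕ => (i : ZMod p)) := by
    intro h
    obtain ⟨i, hi, h⟩ := Finset.mem_image.mp h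
    exact hne0 i hi h
  have hScard : S.card = k + 1 := by
    rw [hS, Finset.card_insert_of_notMem h0S, Finset.card_image_of_injOn hinj]
  -- the value function
  set w : ZMod p → ZMod p := fun x => if x = 0 then s else v x.val with hw
  set L : Polynomial (ZMod p) := Lagrange.interpolate S id w with hL
  have hidinj : Set.InjOn (id : ZMod p → ZMod p) S := Function.injective_id.injOn
  have hLeval : ∀ x ∈ S, L.eval x = w x := by
    intro x hx
    exact Lagrange.eval_interpolate_at_node w hidinj hx
  have hLdeg : L.degree < (k + 1 : ℕ) := by
    rw [hL, ← hScard]; exact Lagrange.degree_interpolate_lt _ hidinj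
  have hLnat : L.natDegree ≤ k := by
    rcases eq_or_ne L 0 with h | h
    · simp [h]
    · have := (degree_eq_natDegree h) ▸ hLdeg
      exact_mod_cast Nat.lt_succ_iff.mp (by exact_mod_cast this)
  set m : Polynomial (ZMod p) := ∏ x ∈ S, (X - C x) with hm
  have hmmonic : m.Monic := monic_prod_of_monic _ _ fun x _ => monic_X_sub_C x
  have hmne : m ≠ 0 := hmmonic.ne_zero
  have hmdeg : m.natDegree = k + 1 := by
    rw [hm, natDegree_prod _ _ fun x _ => X_sub_C_ne_zero x]
    simp [natDegree_X_sub_C, hScard]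
  have hmeval : ∀ x ∈ S, m.eval x = 0 := by
    intro x hx
    rw [hm, eval_prod]
    exact Finset.prod_eq_zero hx (by simp)
  -- key set equality
  have hset : {q : Polynomial (ZMod p) | q.natDegree ≤ t ∧ q.eval 0 = s ∧
      ∀ i ∈ T, q.eval (i : ZMod p) = v i} =
      (fun r => L + m * r) '' ↑(degreeLT (ZMod p) (t - k)) := by
    ext q
    simp only [Set.mem_setOf_eq, Set.mem_image, SetLike.mem_coe, mem_degreeLT]
    constructor
    · rintro ⟨hqd, hq0, hqT⟩
      have hqS : ∀ x ∈ S, (q - L).eval x = 0 := by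
        intro x hx
        rw [hS, Finset.mem_insert] at hx
        rcases hx with rfl | hx
        · have h0 : L.eval 0 = w 0 := hLeval 0 (by simp [hS])
          simp [eval_sub, hq0, h0, hw]
        · obtain ⟨i, hi, rfl⟩ := Finset.mem_image.mp hx
          have hh : L.eval (i : ZMod p) = w (i : ZMod p) :=
            hLeval _ (Finset.mem_insert_of_mem hx)
          rw [eval_sub, hqT i hi, hh, hw]
          simp [hne0 i hi, hval i hi]
      have hdvd : m ∣ q - L := by
        rw [hm]
        refine Finset.prod_dvd_of_coprime ?_ ?_
        · intro a _ b _ hab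
          exact Polynomial.pairwise_coprime_X_sub_C Function.injective_id hab
        · intro x hx
          exact dvd_iff_isRoot.mpr (hqS x hx)
      obtain ⟨r, hr⟩ := hdvd
      refine ⟨r, ?_, by rw [← hr]; ring⟩
      rcases eq_or_ne r 0 with rfl | hrne
      · rw [degree_zero]
        exact WithBot.bot_lt_coe _
      · have hqL : q - L ≠ 0 := by
          rw [hr]; exact mul_ne_zero hmne hrne
        have hnd : (q - L).natDegree = (k + 1) + r.natDegree := by
          rw [hr, natDegree_mul hmne hrne, hmdeg]
        have hqLd : (q - L).natDegree ≤ t :=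
          le_trans (natDegree_sub_le _ _) (max_le hqd (le_trans hLnat hTcard))
        have hrn : r.natDegree < t - k := by omega
        rwa [degree_eq_natDegree hrne, Nat.cast_lt]
    · rintro ⟨r, hrd, rfl⟩
      have hrnat : r = 0 ∨ r.natDegree < t - k := by
        rcases eq_or_ne r 0 with h | h
        · exact Or.inl h
        · right
          rw [degree_eq_natDegree h, Nat.cast_lt] at hrd
          exact hrd
      refine ⟨?_, ?_, ?_⟩
      · rcases hrnat with rfl | h
        · simpa using le_trans hLnat hTcard
        · refine le_trans (natDegree_add_le _ _) (max_le (le_trans hLnat hTcard) ?_)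
          rcases eq_or_ne r 0 with rfl | hrne
          · simp
          · rw [natDegree_mul hmne hrne, hmdeg]; omega
      · have h0 : (0 : ZMod p) ∈ S := by simp [hS]
        rw [eval_add, eval_mul, hmeval 0 h0, zero_mul, add_zero, hLeval 0 h0]
        simp [hw]
      · intro i hi
        have hiS : (i : ZMod p) ∈ S := by
          rw [hS, Finset.mem_insert]; right; exact Finset.mem_image_of_mem _ hi
        rw [eval_add, eval_mul, hmeval _ hiS, zero_mul, add_zero, hLeval _ hiS]
        simp [hw, hne0 i hi, hval i hi]
  rw [hset, Set.ncard_image_of_injective _ (fun a b h =>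
    mul_left_cancel₀ hmne (add_left_cancel h))]
  rw [← Nat.card_coe_set_eq]
  have e1 : Nat.card ↑(↑(degreeLT (ZMod p) (t - k)) : Set (Polynomial (ZMod p)))
      = Nat.card (Fin (t - k) → ZMod p) :=
    Nat.card_congr (Polynomial.degreeLTEquiv (ZMod p) (t - k)).toEquiv
  rw [e1]
  simp [Nat.card_eq_fintype_card, ZMod.card]
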